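/- For every f ∈ R the divergence of the contact field K_f equals Div K_f = (k+1)·∂₀f. In particular, when k is odd (so that k+1 = 0 in K), every contact vector field K_f is divergence-free, and hence the contact Lie algebra coincides with its divergence-free subalgebra. (This is the characteristic-2 analog of Div K_f = (2n+2−m)K₁(f), showing the contact algebra is divergence-free, hence not simple, when the relevant parity condition holds.) -/

import Mathlib

open MvPolynomial

/-- Index type for the variables `x₀, x₁, …, x_{2k}`: `none` is `x₀`, `Sum.inl i` is `x_i`
(for `1 ≤ i ≤ k`) and `Sum.inr i` is `x_{k+i}`. -/
abbrev ContactIdx (k : ℕ) := Option (Fin k ⊕ Fin k)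

/-- The polynomial ring `R = K[x₀, x₁, …, x_{2k}]`. -/
abbrev ContactRing (K : Type*) [Field K] (k : ℕ) := MvPolynomial (ContactIdx k) K

noncomputable section

variable (K : Type*) [Field K] (k : ℕ)

/-- The half Euler operator `E'(f) = Σ_{i=1}^{k} x_i ∂_i f`. -/
def eulerHalf (f : ContactRing K k) : ContactRing K k :=
  ∑ i : Fin k, X (some (Sum.inl i)) * pderiv (some (Sum.inl i)) f

/-- The contact vector field `K_f`, acting on `R`:
`K_f(h) = (f + E'f)∂₀h + (∂₀f)(Σ x_i ∂_i h) + Σ (∂_{k+i}f ∂_i h + ∂_i f ∂_{k+i} h)`. -/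
def contactField (f : ContactRing K k) : ContactRing K k → ContactRing K k := fun h =>
  (f + eulerHalf K k f) * pderiv (none : ContactIdx k) h
    + pderiv (none : ContactIdx k) f *
        (∑ i : Fin k, X (some (Sum.inl i)) * pderiv (some (Sum.inl i)) h)
    + ∑ i : Fin k,
        (pderiv (some (Sum.inr i)) f * pderiv (some (Sum.inl i)) h
          + pderiv (some (Sum.inl i)) f * pderiv (some (Sum.inr i)) h)

/-- The contact bracket
`{f,g} = (∂₀f)(g + E'g) + (f + E'f)(∂₀g) + Σ (∂_i f ∂_{k+i} g + ∂_{k+i} f ∂_i g)`. -/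
def contactBracket (f g : ContactRing K k) : ContactRing K k :=
  pderiv (none : ContactIdx k) f * (g + eulerHalf K k g)
    + (f + eulerHalf K k f) * pderiv (none : ContactIdx k) g
    + ∑ i : Fin k,
        (pderiv (some (Sum.inl i)) f * pderiv (some (Sum.inr i)) g
          + pderiv (some (Sum.inr i)) f * pderiv (some (Sum.inl i)) g)

end

noncomputable section

variable (K : Type*) [Field K] (k : ℕ)

/-- The coefficients of the contact field `K_f = Σ_j contactCoeff f j ∂_j`:
the coefficient of `∂₀` is `f + E'f`, that of `∂_i` is `(∂₀f)x_i + ∂_{k+i}f`, and that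
of `∂_{k+i}` is `∂_i f`. -/
def contactCoeff (f : ContactRing K k) : ContactIdx k → ContactRing K k
  | none => f + eulerHalf K k f
  | some (Sum.inl i) =>
      pderiv (none : ContactIdx k) f * X (some (Sum.inl i)) + pderiv (some (Sum.inr i)) f
  | some (Sum.inr i) => pderiv (some (Sum.inl i)) f

end


lemma pderiv_comm' {σ R : Type*} [CommRing R] [DecidableEq σ] (i j : σ)
    (f : MvPolynomial σ R) :
    pderiv i (pderiv j f) = pderiv j (pderiv i f) := by
  induction f using MvPolynomial.induction_on with
  | C a => simp
  | add p q hp hq => simp [hp, hq]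
  | mul_X p n hp =>
    by_cases hij : n = i <;> by_cases hjn : n = j <;>
      simp [pderiv_mul, hp, hij, hjn, pderiv_X, Pi.single_apply] <;>
      split_ifs with h <;> simp [h, hp] <;> ring

/-- For `p = 2`: `contactCoeff f` are indeed the coefficients of `K_f`, the divergence
`Div K_f = Σ_j ∂_j (coefficient of ∂_j)` equals `(k+1)·∂₀f`, and in particular if `k` is odd
(so that `k + 1 = 0` in `K`) every contact vector field is divergence-free, i.e. the contact
Lie algebra coincides with its divergence-free subalgebra. -/
theorem contactField_divergence {K : Type*} [Field K] [CharP K 2] {k : ℕ} (hk : 1 ≤ k)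
    (f : ContactRing K k) :
    (∀ h, contactField K k f h = ∑ j : ContactIdx k, contactCoeff K k f j * pderiv j h) ∧
    (∑ j : ContactIdx k, pderiv j (contactCoeff K k f j))
      = ((k + 1 : ℕ) : ContactRing K k) * pderiv (none : ContactIdx k) f ∧
    (Odd k → (∑ j : ContactIdx k, pderiv j (contactCoeff K k f j)) = 0) := by
  classical
  have hself : ∀ a : ContactRing K k, a + a = 0 := fun a => CharTwo.add_self_eq_zero a
  have hdiv : (∑ j : ContactIdx k, pderiv j (contactCoeff K k f j))
      = ((k + 1 : ℕ) : ContactRing K k) * pderiv (none : ContactIdx k) f := by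
    rw [Fintype.sum_option, Fintype.sum_sum_type]
    simp only [contactCoeff, eulerHalf, map_add, map_sum, pderiv_mul]
    have h0 : ∀ i : Fin k, pderiv (none : ContactIdx k) (X (some (Sum.inl i))
        : ContactRing K k) = 0 := fun i => pderiv_X_of_ne (by simp)
    have h1 : ∀ i : Fin k, pderiv (some (Sum.inl i) : ContactIdx k)
        (X (some (Sum.inl i)) : ContactRing K k) = 1 := fun i => pderiv_X_self _
    simp only [h0, h1, zero_mul, add_zero, zero_add, mul_one, mul_zero]
    rw [← Finset.sum_add_distrib, add_assoc, ← Finset.sum_add_distrib]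
    have key : ∀ i : Fin k,
        X (some (Sum.inl i)) * pderiv (none : ContactIdx k) (pderiv (some (Sum.inl i)) f)
          + (pderiv (some (Sum.inl i)) (pderiv (none : ContactIdx k) f)
                  * X (some (Sum.inl i))
              + pderiv (none : ContactIdx k) f
              + pderiv (some (Sum.inl i)) (pderiv (some (Sum.inr i)) f)
            + pderiv (some (Sum.inr i) : ContactIdx k) (pderiv (some (Sum.inl i)) f))
        = pderiv (none : ContactIdx k) f := by
      intro i
      have c1 := pderiv_comm' (some (Sum.inl i) : ContactIdx k) none f
      have c2 := pderiv_comm' (some (Sum.inr i) : ContactIdx k) (some (Sum.inl i)) f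
      have e1 := hself (X (some (Sum.inl i))
        * pderiv (none : ContactIdx k) (pderiv (some (Sum.inl i)) f))
      have e2 := hself (pderiv (some (Sum.inl i) : ContactIdx k) (pderiv (some (Sum.inr i)) f))
      linear_combination e1 + e2 + X (some (Sum.inl i)) * c1 + c2
    rw [Finset.sum_congr rfl (fun i _ => key i), Finset.sum_const, Finset.card_univ,
      Fintype.card_fin, nsmul_eq_mul]
    push_cast
    ring
  refine ⟨?_, hdiv, ?_⟩
  · intro h
    rw [Fintype.sum_option, Fintype.sum_sum_type]
    simp only [contactField, contactCoeff]
    rw [Finset.mul_sum, add_assoc, ← Finset.sum_add_distrib, ← Finset.sum_add_distrib]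
    refine congrArg (fun x : ContactRing K k => _ + x) ?_
    apply Finset.sum_congr rfl
    intro i _
    ring
  · intro hodd
    rw [hdiv]
    obtain ⟨m, hm⟩ := hodd
    have : ((k + 1 : ℕ) : ContactRing K k) = 0 := by
      rw [CharP.cast_eq_zero_iff (ContactRing K k) 2]
      omega
    rw [this, zero_mul]
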